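/- Let E and F be events in a finite product probability space {0,1}^V with product measure ℙ_p, where E is the intersection of an increasing event with the (decreasing) event that a fixed set X ⊆ V is empty, and similarly F. Then ℙ_p(E ∘ F) ≤ ℙ_p(E)·ℙ_p(F), where E ∘ F denotes disjoint occurrence: there exist disjoint sets of coordinates witnessing E and F respectively. -/

import Mathlib

open scoped Classical in
/-- The probability of the event `E` under the `p`-random (product Bernoulli)
measure on subsets of the finite set `V`. -/
noncomputable def probEvent {ι : Type*} [DecidableEq ι] (V : Finset ι) (p : ℝ)
    (E : Finset ι → Prop) : ℝ :=
  ∑ A ∈ V.powerset, if E A then p ^ A.card * (1 - p) ^ (V.card - A.card) else 0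

/-- An event (a property of subsets) is increasing. -/
def IncreasingEvent {ι : Type*} (E : Finset ι → Prop) : Prop :=
  ∀ S T : Finset ι, S ⊆ T → E S → E T

/-- The events `E` and `F` occur disjointly for `A`: there are disjoint sets of
coordinates `X` and `Y` such that any configuration agreeing with `A` on `X`
lies in `E` and any configuration agreeing with `A` on `Y` lies in `F`. -/
def DisjOcc {ι : Type*} [DecidableEq ι] (E F : Finset ι → Prop) (A : Finset ι) : Prop :=
  ∃ X Y : Finset ι, Disjoint X Y ∧
    (∀ S : Finset ι, S ∩ X = A ∩ X → E S) ∧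
    (∀ T : Finset ι, T ∩ Y = A ∩ Y → F T)


namespace BKaux
open Finset

open scoped Classical

variable {ι : Type*} [DecidableEq ι]

/-- indicator of a proposition -/
noncomputable def ind (P : Prop) : ℝ := if P then 1 else 0

lemma ind_nonneg (P : Prop) : 0 ≤ ind P := by unfold ind; split <;> norm_num
lemma ind_le_one (P : Prop) : ind P ≤ 1 := by unfold ind; split <;> norm_num
lemma ind_of (P : Prop) (h : P) : ind P = 1 := by simp [ind, h]
lemma ind_mono {P Q : Prop} (h : P → Q) : ind P ≤ ind Q := by
  unfold ind; split
  · rename_i hP; simp [h hP]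
  · exact ind_nonneg Q

/-- the Bernoulli weight of a configuration `A` in a ground set of size `n` -/
noncomputable def bkW (p : ℝ) (n : ℕ) (A : Finset ι) : ℝ :=
  p ^ A.card * (1 - p) ^ (n - A.card)

lemma bkW_nonneg {p : ℝ} (hp0 : 0 ≤ p) (hp1 : p ≤ 1) (n : ℕ) (A : Finset ι) :
    0 ≤ bkW p n A := by
  have : (0:ℝ) ≤ 1 - p := by linarith
  exact mul_nonneg (pow_nonneg hp0 _) (pow_nonneg this _)

noncomputable def bkP (V : Finset ι) (p : ℝ) (E : Finset ι → Prop) : ℝ :=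
  ∑ A ∈ V.powerset, bkW p V.card A * ind (E A)

lemma probEvent_eq_bkP (V : Finset ι) (p : ℝ) (E : Finset ι → Prop) :
    probEvent V p E = bkP V p E := by
  unfold probEvent bkP bkW ind
  refine Finset.sum_congr rfl fun A _ => ?_
  by_cases h : E A <;> simp [h]

lemma bkP_nonneg {p : ℝ} (hp0 : 0 ≤ p) (hp1 : p ≤ 1) (V : Finset ι) (E : Finset ι → Prop) :
    0 ≤ bkP V p E :=
  Finset.sum_nonneg fun A _ => mul_nonneg (bkW_nonneg hp0 hp1 _ _) (ind_nonneg _)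

lemma bkP_mono_event {p : ℝ} (hp0 : 0 ≤ p) (hp1 : p ≤ 1) (V : Finset ι)
    {E F : Finset ι → Prop} (h : ∀ A, A ⊆ V → E A → F A) :
    bkP V p E ≤ bkP V p F := by
  refine Finset.sum_le_sum fun A hA => ?_
  exact mul_le_mul_of_nonneg_left (ind_mono (h A (mem_powerset.mp hA)))
    (bkW_nonneg hp0 hp1 _ _)

lemma bkW_subset_insert {p : ℝ} {S : Finset ι} {k : ι} (hk : k ∉ S) {A : Finset ι}
    (hA : A ⊆ S) : bkW p (insert k S).card A = (1 - p) * bkW p S.card A := by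
  have h1 : (insert k S).card = S.card + 1 := card_insert_of_notMem hk
  have h2 : A.card ≤ S.card := card_le_card hA
  unfold bkW
  rw [h1]
  have : S.card + 1 - A.card = (S.card - A.card) + 1 := by omega
  rw [this, pow_succ]
  ring

lemma bkW_insert_insert {p : ℝ} {S : Finset ι} {k : ι} (hk : k ∉ S) {A : Finset ι}
    (hA : A ⊆ S) : bkW p (insert k S).card (insert k A) = p * bkW p S.card A := by
  have hkA : k ∉ A := fun h => hk (hA h)
  have h1 : (insert k S).card = S.card + 1 := card_insert_of_notMem hk
  have h2 : (insert k A).card = A.card + 1 := card_insert_of_notMem hkA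
  have h3 : A.card ≤ S.card := card_le_card hA
  unfold bkW
  rw [h1, h2]
  have : S.card + 1 - (A.card + 1) = S.card - A.card := by omega
  rw [this, pow_succ]
  ring

lemma sum_bkW (p : ℝ) (V : Finset ι) : ∑ A ∈ V.powerset, bkW p V.card A = 1 := by
  have := Finset.prod_add (fun _ : ι => p) (fun _ : ι => 1 - p) V
  simp only [prod_const] at this
  have h1 : p + (1 - p) = 1 := by ring
  rw [h1, one_pow] at this
  have h2 : ∑ A ∈ V.powerset, p ^ A.card * (1 - p) ^ (V.card - A.card)
      = ∑ A ∈ V.powerset, p ^ A.card * (1 - p) ^ (V \ A).card :=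
    Finset.sum_congr rfl fun A hA => by rw [card_sdiff_of_subset (mem_powerset.mp hA)]
  unfold bkW
  rw [h2, ← this]

lemma bkP_insert {p : ℝ} {S : Finset ι} {k : ι} (hk : k ∉ S) (E : Finset ι → Prop) :
    bkP (insert k S) p E
      = (1 - p) * bkP S p E + p * bkP S p (fun A => E (insert k A)) := by
  unfold bkP
  rw [Finset.sum_powerset_insert hk]
  rw [Finset.mul_sum, Finset.mul_sum]
  congr 1
  · refine Finset.sum_congr rfl fun A hA => ?_
    rw [bkW_subset_insert hk (mem_powerset.mp hA)]; ring
  · refine Finset.sum_congr rfl fun A hA => ?_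
    rw [bkW_insert_insert hk (mem_powerset.mp hA)]; ring

lemma bkP_le_insert {p : ℝ} (hp0 : 0 ≤ p) (hp1 : p ≤ 1) {S : Finset ι} {k : ι}
    {E : Finset ι → Prop} (hE : IncreasingEvent E) :
    bkP S p E ≤ bkP (insert k S) p E := by
  by_cases hk : k ∈ S
  · rw [insert_eq_self.mpr hk]
  · rw [bkP_insert hk]
    have h1 : bkP S p E ≤ bkP S p (fun A => E (insert k A)) :=
      bkP_mono_event hp0 hp1 S fun A _ hA => hE A (insert k A) (subset_insert _ _) hA
    nlinarith [bkP_nonneg hp0 hp1 S E]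

lemma bkP_mono_domain {p : ℝ} (hp0 : 0 ≤ p) (hp1 : p ≤ 1) {S T : Finset ι}
    {E : Finset ι → Prop} (hE : IncreasingEvent E) (hST : S ⊆ T) :
    bkP S p E ≤ bkP T p E := by
  have key : ∀ D : Finset ι, bkP S p E ≤ bkP (S ∪ D) p E := by
    intro D
    induction D using Finset.induction_on with
    | empty => simp
    | insert a D hx ih =>
      calc bkP S p E ≤ bkP (S ∪ D) p E := ih
        _ ≤ bkP (insert a (S ∪ D)) p E := bkP_le_insert hp0 hp1 hE
        _ = bkP (S ∪ insert a D) p E := by rw [Finset.union_insert]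
  calc bkP S p E ≤ bkP (S ∪ T) p E := key T
    _ = bkP T p E := by rw [Finset.union_eq_right.mpr hST]

lemma bkP_inter_empty {p : ℝ} {V X₀ : Finset ι} (hX : X₀ ⊆ V) (E : Finset ι → Prop) :
    bkP V p (fun A => E A ∧ A ∩ X₀ = ∅)
      = (1 - p) ^ X₀.card * bkP (V \ X₀) p E := by
  unfold bkP
  rw [Finset.mul_sum]
  rw [← Finset.sum_subset (powerset_mono.mpr (sdiff_subset : V \ X₀ ⊆ V))]
  · refine Finset.sum_congr rfl fun A hA => ?_
    have hA' : A ⊆ V \ X₀ := mem_powerset.mp hA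
    have hdisj : Disjoint A X₀ := (subset_sdiff.mp hA').2
    have hempty : A ∩ X₀ = ∅ := by
      rwa [← Finset.disjoint_iff_inter_eq_empty]
    have hind : ind (E A ∧ A ∩ X₀ = ∅) = ind (E A) := by
      unfold ind
      by_cases hEA : E A <;> simp [hEA, hempty]
    rw [hind]
    have hcard : (V \ X₀).card = V.card - X₀.card := card_sdiff_of_subset hX
    have hAle : A.card ≤ (V \ X₀).card := card_le_card hA'
    have hXle : X₀.card ≤ V.card := card_le_card hX
    unfold bkW
    rw [hcard] at hAle ⊢
    have harith : V.card - A.card = X₀.card + (V.card - X₀.card - A.card) := by omega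
    rw [harith, pow_add]
    ring
  · intro A hAV hAn
    have hAV' : A ⊆ V := mem_powerset.mp hAV
    have : ¬ (A ⊆ V \ X₀) := fun h => hAn (mem_powerset.mpr h)
    have hne : ¬ (A ∩ X₀ = ∅) := by
      intro hempty
      exact this (subset_sdiff.mpr ⟨hAV', Finset.disjoint_iff_inter_eq_empty.mpr hempty⟩)
    have : ind (E A ∧ A ∩ X₀ = ∅) = 0 := by
      unfold ind; simp [hne]
    rw [this, mul_zero]
/-! ### Two independent copies -/

noncomputable def bkP2 (V : Finset ι) (p : ℝ) (G : Finset ι → Finset ι → Prop) : ℝ :=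
  ∑ A ∈ V.powerset, ∑ B ∈ V.powerset,
    bkW p V.card A * bkW p V.card B * ind (G A B)

lemma bkP2_const (V : Finset ι) (p : ℝ) (E : Finset ι → Prop) :
    bkP2 V p (fun A _ => E A) = bkP V p E := by
  unfold bkP2 bkP
  refine Finset.sum_congr rfl fun A _ => ?_
  have h : ∑ B ∈ V.powerset, bkW p V.card A * bkW p V.card B * ind (E A)
      = (bkW p V.card A * ind (E A)) * ∑ B ∈ V.powerset, bkW p V.card B := by
    rw [Finset.mul_sum]
    exact Finset.sum_congr rfl fun B _ => by ring
  rw [h, sum_bkW, mul_one]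

lemma bkP2_prod (V : Finset ι) (p : ℝ) (E F : Finset ι → Prop) :
    bkP2 V p (fun A B => E A ∧ F B) = bkP V p E * bkP V p F := by
  unfold bkP2 bkP
  rw [Finset.sum_mul]
  refine Finset.sum_congr rfl fun A _ => ?_
  rw [Finset.mul_sum]
  refine Finset.sum_congr rfl fun B _ => ?_
  have h : ind (E A ∧ F B) = ind (E A) * ind (F B) := by
    unfold ind; by_cases h1 : E A <;> by_cases h2 : F B <;> simp [h1, h2]
  rw [h]; ring

lemma bkP2_mono {p : ℝ} (hp0 : 0 ≤ p) (hp1 : p ≤ 1) (V : Finset ι)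
    {G H : Finset ι → Finset ι → Prop}
    (h : ∀ A B, A ⊆ V → B ⊆ V → G A B → H A B) :
    bkP2 V p G ≤ bkP2 V p H := by
  refine Finset.sum_le_sum fun A hA => Finset.sum_le_sum fun B hB => ?_
  exact mul_le_mul_of_nonneg_left
    (ind_mono (h A B (mem_powerset.mp hA) (mem_powerset.mp hB)))
    (mul_nonneg (bkW_nonneg hp0 hp1 _ _) (bkW_nonneg hp0 hp1 _ _))

lemma bkP2_congr (V : Finset ι) (p : ℝ) {G H : Finset ι → Finset ι → Prop}
    (h : ∀ A B, G A B ↔ H A B) : bkP2 V p G = bkP2 V p H := by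
  unfold bkP2
  refine Finset.sum_congr rfl fun A _ => Finset.sum_congr rfl fun B _ => ?_
  have : ind (G A B) = ind (H A B) := by unfold ind; simp only [h]
  rw [this]

lemma inner_expand {p : ℝ} {S : Finset ι} {k : ι} (hk : k ∉ S) (c : ℝ)
    (f : Finset ι → Prop) :
    ∑ B ∈ (insert k S).powerset, c * bkW p (insert k S).card B * ind (f B)
    = ∑ B ∈ S.powerset, c * bkW p S.card B *
        ((1 - p) * ind (f B) + p * ind (f (insert k B))) := by
  rw [Finset.sum_powerset_insert hk, ← Finset.sum_add_distrib]
  refine Finset.sum_congr rfl fun B hB => ?_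
  rw [bkW_subset_insert hk (mem_powerset.mp hB), bkW_insert_insert hk (mem_powerset.mp hB)]
  ring

lemma bkP2_insert {p : ℝ} {S : Finset ι} {k : ι} (hk : k ∉ S)
    (G : Finset ι → Finset ι → Prop) :
    bkP2 (insert k S) p G = ∑ A ∈ S.powerset, ∑ B ∈ S.powerset,
      (bkW p S.card A * bkW p S.card B) *
        ((1 - p) * (1 - p) * ind (G A B) + (1 - p) * p * ind (G A (insert k B))
          + p * (1 - p) * ind (G (insert k A) B)
          + p * p * ind (G (insert k A) (insert k B))) := by
  unfold bkP2
  rw [Finset.sum_powerset_insert hk, ← Finset.sum_add_distrib]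
  refine Finset.sum_congr rfl fun A hA => ?_
  rw [inner_expand hk, inner_expand hk, ← Finset.sum_add_distrib]
  refine Finset.sum_congr rfl fun B hB => ?_
  rw [bkW_subset_insert hk (mem_powerset.mp hA), bkW_insert_insert hk (mem_powerset.mp hA)]
  ring

lemma pointwise_ineq {p : ℝ} (hp0 : 0 ≤ p) (hp1 : p ≤ 1)
    (L00 L01 L10 L11 R00 R01 R10 R11 : Prop)
    (hL01 : L01 → L00) (hL11 : L11 → L10)
    (hA : L10 → R11 ∧ (R10 ∨ R01))
    (hB : L00 → R00 ∧ R01 ∧ R10 ∧ R11) :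
    (1 - p) * (1 - p) * ind L00 + (1 - p) * p * ind L01
      + p * (1 - p) * ind L10 + p * p * ind L11
    ≤ (1 - p) * (1 - p) * ind R00 + (1 - p) * p * ind R01
      + p * (1 - p) * ind R10 + p * p * ind R11 := by
  have hq : (0:ℝ) ≤ 1 - p := by linarith
  by_cases h00 : L00
  · obtain ⟨r0, r1, r2, r3⟩ := hB h00
    rw [ind_of _ r0, ind_of _ r1, ind_of _ r2, ind_of _ r3]
    have i0 := ind_le_one L00; have i1 := ind_le_one L01
    have i2 := ind_le_one L10; have i3 := ind_le_one L11
    nlinarith [mul_nonneg hq hq, mul_nonneg hq hp0, mul_nonneg hp0 hp0,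
      mul_nonneg (mul_nonneg hq hq) (sub_nonneg.mpr i0),
      mul_nonneg (mul_nonneg hq hp0) (sub_nonneg.mpr i1),
      mul_nonneg (mul_nonneg hp0 hq) (sub_nonneg.mpr i2),
      mul_nonneg (mul_nonneg hp0 hp0) (sub_nonneg.mpr i3)]
  · have l00 : ind L00 = 0 := by unfold ind; simp [h00]
    have l01 : ind L01 = 0 := by unfold ind; exact if_neg (fun h => h00 (hL01 h))
    by_cases h10 : L10
    · obtain ⟨r3, hor⟩ := hA h10
      have i2 := ind_le_one L10; have i3 := ind_le_one L11
      have j0 := ind_nonneg R00; have j1 := ind_nonneg R01; have j2 := ind_nonneg R10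
      rw [l00, l01, ind_of _ r3]
      rcases hor with h | h
      · rw [ind_of _ h]
        nlinarith [mul_nonneg hq hq, mul_nonneg hq hp0, mul_nonneg hp0 hp0,
          mul_nonneg (mul_nonneg hp0 hq) (sub_nonneg.mpr i2),
          mul_nonneg (mul_nonneg hp0 hp0) (sub_nonneg.mpr i3)]
      · rw [ind_of _ h]
        nlinarith [mul_nonneg hq hq, mul_nonneg hq hp0, mul_nonneg hp0 hp0,
          mul_nonneg (mul_nonneg hp0 hq) (sub_nonneg.mpr i2),
          mul_nonneg (mul_nonneg hp0 hp0) (sub_nonneg.mpr i3)]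
    · have l10 : ind L10 = 0 := by unfold ind; simp [h10]
      have l11 : ind L11 = 0 := by unfold ind; exact if_neg (fun h => h10 (hL11 h))
      rw [l00, l01, l10, l11]
      have j0 := ind_nonneg R00; have j1 := ind_nonneg R01
      have j2 := ind_nonneg R10; have j3 := ind_nonneg R11
      nlinarith [mul_nonneg hq hq, mul_nonneg hq hp0, mul_nonneg hp0 hp0]
/-! ### The hybrid disjoint-occurrence event -/

def GK (E F : Finset ι → Prop) (K A B : Finset ι) : Prop :=
  ∃ X Y : Finset ι, Disjoint X Y ∧ X ⊆ A ∧ E X ∧ Y ⊆ (A \ K) ∪ (B ∩ K) ∧ F Y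

lemma GK_mono {E F : Finset ι → Prop} {K A A' B B' : Finset ι}
    (hA : A ⊆ A') (hB : B ⊆ B') : GK E F K A B → GK E F K A' B' := by
  rintro ⟨X, Y, hd, hXA, hEX, hY, hFY⟩
  exact ⟨X, Y, hd, hXA.trans hA, hEX,
    hY.trans (union_subset_union (sdiff_subset_sdiff hA (Finset.Subset.refl K))
      (inter_subset_inter hB (Finset.Subset.refl K))), hFY⟩

lemma GK_insertB {E F : Finset ι → Prop} {K A B : Finset ι} {k : ι} (hkK : k ∉ K) :
    GK E F K A (insert k B) ↔ GK E F K A B := by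
  unfold GK
  rw [Finset.insert_inter_of_notMem hkK]

lemma GK_insertK {E F : Finset ι → Prop} {K A B : Finset ι} {k : ι}
    (hkA : k ∉ A) (hkB : k ∉ B) :
    GK E F K A B → GK E F (insert k K) A B := by
  rintro ⟨X, Y, hd, hXA, hEX, hY, hFY⟩
  refine ⟨X, Y, hd, hXA, hEX, ?_, hFY⟩
  have hset : (A \ insert k K) ∪ (B ∩ insert k K) = (A \ K) ∪ (B ∩ K) := by
    ext x
    simp only [mem_union, mem_sdiff, mem_inter, mem_insert]
    constructor
    · rintro (⟨hxA, hx⟩ | ⟨hxB, hx | hx⟩)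
      · exact Or.inl ⟨hxA, fun h => hx (Or.inr h)⟩
      · exact absurd (hx ▸ hxB) hkB
      · exact Or.inr ⟨hxB, hx⟩
    · rintro (⟨hxA, hx⟩ | ⟨hxB, hx⟩)
      · refine Or.inl ⟨hxA, ?_⟩
        rintro (rfl | h)
        · exact hkA hxA
        · exact hx h
      · exact Or.inr ⟨hxB, Or.inr hx⟩
  rw [hset]
  exact hY

/-- The key case analysis at coordinate `k`. -/
lemma GK_step {E F : Finset ι → Prop} {K A B : Finset ι} {k : ι}
    (hkK : k ∉ K) (hkA : k ∉ A) (hkB : k ∉ B) :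
    GK E F K (insert k A) B →
      GK E F (insert k K) (insert k A) B ∨ GK E F (insert k K) A (insert k B) := by
  rintro ⟨X, Y, hd, hXA, hEX, hY, hFY⟩
  by_cases hkY : k ∈ Y
  · right
    have hkX : k ∉ X := fun h => (Finset.disjoint_left.mp hd h) hkY
    refine ⟨X, Y, hd, ?_, hEX, ?_, hFY⟩
    · intro x hx
      rcases mem_insert.mp (hXA hx) with rfl | h
      · exact absurd hx hkX
      · exact h
    · intro x hx
      rcases mem_union.mp (hY hx) with h | h
      · rcases mem_sdiff.mp h with ⟨hxA, hxK⟩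
        rcases mem_insert.mp hxA with rfl | hxA'
        · exact mem_union.mpr (Or.inr (mem_inter.mpr
            ⟨mem_insert_self _ _, mem_insert_self _ _⟩))
        · refine mem_union.mpr (Or.inl (mem_sdiff.mpr ⟨hxA', ?_⟩))
          intro hmem
          rcases mem_insert.mp hmem with rfl | h'
          · exact hkA hxA'
          · exact hxK h'
      · rcases mem_inter.mp h with ⟨hxB, hxK⟩
        exact mem_union.mpr (Or.inr (mem_inter.mpr
          ⟨mem_insert_of_mem hxB, mem_insert_of_mem hxK⟩))
  · left
    refine ⟨X, Y, hd, hXA, hEX, ?_, hFY⟩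
    intro x hx
    have hxk : x ≠ k := fun h => hkY (h ▸ hx)
    rcases mem_union.mp (hY hx) with h | h
    · rcases mem_sdiff.mp h with ⟨hxA, hxK⟩
      refine mem_union.mpr (Or.inl (mem_sdiff.mpr ⟨hxA, ?_⟩))
      intro hmem
      rcases mem_insert.mp hmem with rfl | h'
      · exact hxk rfl
      · exact hxK h'
    · rcases mem_inter.mp h with ⟨hxB, hxK⟩
      exact mem_union.mpr (Or.inr (mem_inter.mpr ⟨hxB, mem_insert_of_mem hxK⟩))

lemma bkP2_GK_step {p : ℝ} (hp0 : 0 ≤ p) (hp1 : p ≤ 1) {V : Finset ι}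
    (E F : Finset ι → Prop) {K : Finset ι} {k : ι} (hkV : k ∈ V) (hkK : k ∉ K) :
    bkP2 V p (GK E F K) ≤ bkP2 V p (GK E F (insert k K)) := by
  have hk : k ∉ V.erase k := notMem_erase _ _
  have hV : V = insert k (V.erase k) := (insert_erase hkV).symm
  rw [hV, bkP2_insert hk, bkP2_insert hk]
  refine Finset.sum_le_sum fun A hA => Finset.sum_le_sum fun B hB => ?_
  have hkA : k ∉ A := fun h => hk (mem_powerset.mp hA h)
  have hkB : k ∉ B := fun h => hk (mem_powerset.mp hB h)
  refine mul_le_mul_of_nonneg_left ?_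
    (mul_nonneg (bkW_nonneg hp0 hp1 _ _) (bkW_nonneg hp0 hp1 _ _))
  refine pointwise_ineq hp0 hp1 _ _ _ _ _ _ _ _ ?_ ?_ ?_ ?_
  · exact (GK_insertB hkK).mp
  · exact (GK_insertB hkK).mp
  · intro h10
    rcases GK_step hkK hkA hkB h10 with h | h
    · exact ⟨GK_mono (Finset.Subset.refl _) (subset_insert _ _) h, Or.inl h⟩
    · exact ⟨GK_mono (subset_insert _ _) (Finset.Subset.refl _) h, Or.inr h⟩
  · intro h00
    have h := GK_insertK hkA hkB h00
    exact ⟨h, GK_mono (Finset.Subset.refl _) (subset_insert _ _) h,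
      GK_mono (subset_insert _ _) (Finset.Subset.refl _) h,
      GK_mono (subset_insert _ _) (subset_insert _ _) h⟩
/-- Disjoint occurrence in witness form convenient for increasing events. -/
def DOI (E F : Finset ι → Prop) (A : Finset ι) : Prop :=
  ∃ X Y : Finset ι, Disjoint X Y ∧ X ⊆ A ∧ E X ∧ Y ⊆ A ∧ F Y

lemma DOI_increasing (E F : Finset ι → Prop) : IncreasingEvent (DOI E F) := by
  rintro S T hST ⟨X, Y, hd, hX, hEX, hY, hFY⟩
  exact ⟨X, Y, hd, hX.trans hST, hEX, hY.trans hST, hFY⟩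

lemma GK_empty (E F : Finset ι → Prop) (A B : Finset ι) :
    GK E F ∅ A B ↔ DOI E F A := by
  unfold GK DOI
  simp

lemma bkP2_chain {p : ℝ} (hp0 : 0 ≤ p) (hp1 : p ≤ 1) {V : Finset ι}
    (E F : Finset ι → Prop) :
    ∀ K : Finset ι, K ⊆ V → bkP2 V p (GK E F ∅) ≤ bkP2 V p (GK E F K) := by
  intro K
  induction K using Finset.induction_on with
  | empty => intro _; exact le_refl _
  | insert k K hx ih =>
    intro hsub
    have hkV : k ∈ V := hsub (mem_insert_self _ _)
    have hKV : K ⊆ V := (subset_insert _ _).trans hsub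
    exact (ih hKV).trans (bkP2_GK_step hp0 hp1 E F hkV hx)

/-- The van den Berg–Kesten inequality for increasing events. -/
theorem bk_increasing {p : ℝ} (hp0 : 0 ≤ p) (hp1 : p ≤ 1) (V : Finset ι)
    {E F : Finset ι → Prop} (hE : IncreasingEvent E) (hF : IncreasingEvent F) :
    bkP V p (DOI E F) ≤ bkP V p E * bkP V p F := by
  have h1 : bkP V p (DOI E F) = bkP2 V p (GK E F ∅) := by
    rw [← bkP2_const V p (DOI E F)]
    exact bkP2_congr V p fun A B => (GK_empty E F A B).symm
  have h2 : bkP2 V p (GK E F V) ≤ bkP2 V p (fun A B => E A ∧ F B) := by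
    refine bkP2_mono hp0 hp1 V ?_
    rintro A B hAV hBV ⟨X, Y, hd, hXA, hEX, hY, hFY⟩
    constructor
    · exact hE X A hXA hEX
    · refine hF Y B ?_ hFY
      intro y hy
      rcases mem_union.mp (hY hy) with h | h
      · exact absurd (mem_sdiff.mp h).2 (not_not.mpr (hAV (mem_sdiff.mp h).1))
      · exact (mem_inter.mp h).1
  calc bkP V p (DOI E F) = bkP2 V p (GK E F ∅) := h1
    _ ≤ bkP2 V p (GK E F V) := bkP2_chain hp0 hp1 E F V (Finset.Subset.refl V)
    _ ≤ bkP2 V p (fun A B => E A ∧ F B) := h2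
    _ = bkP V p E * bkP V p F := bkP2_prod V p E F
lemma bkP_false (V : Finset ι) (p : ℝ) : bkP V p (fun _ => False) = 0 := by
  unfold bkP ind
  simp

lemma mixed_side {Ep : Finset ι → Prop} {X₀ X A : Finset ι}
    (h : ∀ S, S ∩ X = A ∩ X → (Ep S ∧ S ∩ X₀ = ∅)) :
    X₀ ⊆ X ∧ A ∩ X₀ = ∅ ∧ Ep (A ∩ X) := by
  have hA := h A rfl
  have h1 : (A ∩ X) ∩ X = A ∩ X := by rw [inter_assoc, inter_self]
  have hAX := h (A ∩ X) h1
  have hS : ((A ∩ X) ∪ (X₀ \ X)) ∩ X = A ∩ X := by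
    rw [union_inter_distrib_right, sdiff_inter_self, union_empty, inter_assoc, inter_self]
  have hS2 := (h _ hS).2
  have hsub : X₀ \ X ⊆ ((A ∩ X) ∪ (X₀ \ X)) ∩ X₀ := fun x hx =>
    mem_inter.mpr ⟨mem_union_right _ hx, (mem_sdiff.mp hx).1⟩
  rw [hS2, Finset.subset_empty, sdiff_eq_empty_iff_subset] at hsub
  exact ⟨hsub, hA.2, hAX.1⟩

theorem vdBK_mixed {ι : Type*} [DecidableEq ι] (V : Finset ι)
    (p : ℝ) (hp0 : 0 ≤ p) (hp1 : p ≤ 1)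
    (Eplus Fplus : Finset ι → Prop)
    (hE : IncreasingEvent Eplus) (hF : IncreasingEvent Fplus)
    (X₀ Y₀ : Finset ι) (hX₀ : X₀ ⊆ V) (hY₀ : Y₀ ⊆ V) :
    probEvent V p (DisjOcc (fun A => Eplus A ∧ A ∩ X₀ = ∅)
        (fun A => Fplus A ∧ A ∩ Y₀ = ∅)) ≤
      probEvent V p (fun A => Eplus A ∧ A ∩ X₀ = ∅) *
        probEvent V p (fun A => Fplus A ∧ A ∩ Y₀ = ∅) := by
  have hq : (0:ℝ) ≤ 1 - p := by linarith
  rw [probEvent_eq_bkP, probEvent_eq_bkP, probEvent_eq_bkP]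
  rw [bkP_inter_empty hX₀, bkP_inter_empty hY₀]
  by_cases hdisj : Disjoint X₀ Y₀
  · -- main case
    set W := X₀ ∪ Y₀ with hW
    have hWV : W ⊆ V := union_subset hX₀ hY₀
    have step1 : ∀ A, A ⊆ V →
        DisjOcc (fun A => Eplus A ∧ A ∩ X₀ = ∅) (fun A => Fplus A ∧ A ∩ Y₀ = ∅) A →
        (DOI Eplus Fplus A ∧ A ∩ W = ∅) := by
      rintro A _ ⟨X, Y, hd, hXs, hYs⟩
      obtain ⟨hX0X, hAX0, hEpAX⟩ := mixed_side hXs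
      obtain ⟨hY0Y, hAY0, hFpAY⟩ := mixed_side hYs
      refine ⟨⟨A ∩ X, A ∩ Y, hd.mono inter_subset_right inter_subset_right,
        inter_subset_left, hEpAX, inter_subset_left, hFpAY⟩, ?_⟩
      rw [hW, inter_union_distrib_left, hAX0, hAY0, union_empty]
    calc bkP V p (DisjOcc (fun A => Eplus A ∧ A ∩ X₀ = ∅)
            (fun A => Fplus A ∧ A ∩ Y₀ = ∅))
        ≤ bkP V p (fun A => DOI Eplus Fplus A ∧ A ∩ W = ∅) :=
          bkP_mono_event hp0 hp1 V step1
      _ = (1 - p) ^ W.card * bkP (V \ W) p (DOI Eplus Fplus) :=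
          bkP_inter_empty hWV _
      _ ≤ (1 - p) ^ W.card * (bkP (V \ W) p Eplus * bkP (V \ W) p Fplus) :=
          mul_le_mul_of_nonneg_left (bk_increasing hp0 hp1 _ hE hF) (pow_nonneg hq _)
      _ ≤ (1 - p) ^ X₀.card * bkP (V \ X₀) p Eplus *
            ((1 - p) ^ Y₀.card * bkP (V \ Y₀) p Fplus) := by
          have e1 : bkP (V \ W) p Eplus ≤ bkP (V \ X₀) p Eplus :=
            bkP_mono_domain hp0 hp1 hE
              (sdiff_subset_sdiff (Finset.Subset.refl V) subset_union_left)
          have e2 : bkP (V \ W) p Fplus ≤ bkP (V \ Y₀) p Fplus :=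
            bkP_mono_domain hp0 hp1 hF
              (sdiff_subset_sdiff (Finset.Subset.refl V) subset_union_right)
          have key : bkP (V \ W) p Eplus * bkP (V \ W) p Fplus
              ≤ bkP (V \ X₀) p Eplus * bkP (V \ Y₀) p Fplus :=
            mul_le_mul e1 e2 (bkP_nonneg hp0 hp1 _ _)
              (le_trans (bkP_nonneg hp0 hp1 _ _) e1)
          have hcard : W.card = X₀.card + Y₀.card := card_union_of_disjoint hdisj
          calc (1 - p) ^ W.card * (bkP (V \ W) p Eplus * bkP (V \ W) p Fplus)
              ≤ (1 - p) ^ W.card * (bkP (V \ X₀) p Eplus * bkP (V \ Y₀) p Fplus) :=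
                mul_le_mul_of_nonneg_left key (pow_nonneg hq _)
            _ = (1 - p) ^ X₀.card * bkP (V \ X₀) p Eplus *
                  ((1 - p) ^ Y₀.card * bkP (V \ Y₀) p Fplus) := by
                rw [hcard, pow_add]; ring
  · -- degenerate case: the left-hand event is empty
    have hfalse : ∀ A, A ⊆ V →
        DisjOcc (fun A => Eplus A ∧ A ∩ X₀ = ∅) (fun A => Fplus A ∧ A ∩ Y₀ = ∅) A →
        False := by
      rintro A _ ⟨X, Y, hd, hXs, hYs⟩
      obtain ⟨hX0X, -, -⟩ := mixed_side hXs
      obtain ⟨hY0Y, -, -⟩ := mixed_side hYs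
      exact hdisj (hd.mono hX0X hY0Y)
    calc bkP V p (DisjOcc (fun A => Eplus A ∧ A ∩ X₀ = ∅)
            (fun A => Fplus A ∧ A ∩ Y₀ = ∅))
        ≤ bkP V p (fun _ => False) := bkP_mono_event hp0 hp1 V hfalse
      _ = 0 := bkP_false V p
      _ ≤ _ := mul_nonneg (mul_nonneg (pow_nonneg hq _) (bkP_nonneg hp0 hp1 _ _))
          (mul_nonneg (pow_nonneg hq _) (bkP_nonneg hp0 hp1 _ _))

end BKaux

/-- The van den Berg–Kesten / van den Berg–Fiebig inequality for events that
are intersections of an increasing event with a primitive decreasing event. -/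
theorem vdBK_for_mixed_events {ι : Type*} [DecidableEq ι] (V : Finset ι)
    (p : ℝ) (hp0 : 0 ≤ p) (hp1 : p ≤ 1)
    (Eplus Fplus : Finset ι → Prop)
    (hE : IncreasingEvent Eplus) (hF : IncreasingEvent Fplus)
    (X₀ Y₀ : Finset ι) (hX₀ : X₀ ⊆ V) (hY₀ : Y₀ ⊆ V) :
    probEvent V p (DisjOcc (fun A => Eplus A ∧ A ∩ X₀ = ∅)
        (fun A => Fplus A ∧ A ∩ Y₀ = ∅)) ≤
      probEvent V p (fun A => Eplus A ∧ A ∩ X₀ = ∅) *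
        probEvent V p (fun A => Fplus A ∧ A ∩ Y₀ = ∅) := by
  exact BKaux.vdBK_mixed V p hp0 hp1 Eplus Fplus hE hF X₀ Y₀ hX₀ hY₀
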